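/- arXiv:2409.01097 — 5 statements merged into one kernel-verified Lean document; each statement's English description precedes it below -/
import Mathlib

section
/- On X = ℝ with g = h = |·|, for x ≠ 0 and p = x/|x| ∈ ∂g(x), the function λ ↦ (g □ h)(λ x) = |λ||x| tends to +∞ as λ → ∞, while the function λ ↦ (D_g^p(·, x) □ h)(λ x) satisfies D_g^p(λ x, x) = 0 for all λ ≥ 0 and hence (D_g^p(·,x) □ h)(λx) → 0 as λ → ∞. In particular, coercivity of an infimal convolution is not preserved when one functional is replaced by its Bregman distance. -/
open Filter

noncomputable section

/-- Infimal convolution of real-valued functions on `ℝ`. -/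
def infConvR (f h : ℝ → ℝ) (t : ℝ) : ℝ := ⨅ s : ℝ, f s + h (t - s)

lemma infConv_abs (t : ℝ) : infConvR (fun t => |t|) (fun t => |t|) t = |t| := by
  unfold infConvR
  apply le_antisymm
  · have hb : BddBelow (Set.range fun s : ℝ => |s| + |t - s|) := by
      refine ⟨0, ?_⟩
      rintro y ⟨s, rfl⟩
      positivity
    have := ciInf_le hb 0
    simpa using this
  · refine le_ciInf fun s => ?_
    calc |t| = |s + (t - s)| := by ring_nf
    _ ≤ |s| + |t - s| := abs_add_le _ _

lemma px_eq (x : ℝ) (hx : x ≠ 0) : (x / |x|) * x = |x| := by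
  field_simp
  exact (sq_abs x).symm

/-- On `ℝ` with `g = h = |·|`, `x ≠ 0` and `p = x/|x| ∈ ∂g(x)`:
`(g □ h)(λx) = |λ||x| → ∞` as `λ → ∞`, while `D_g^p(λx, x) = 0` for `λ ≥ 0` and
`(D_g^p(·,x) □ h)(λx) → 0`; so coercivity of an infimal convolution is not preserved
when one functional is replaced by its Bregman distance. -/
theorem bregman_breaks_coercivity (x p : ℝ) (hx : x ≠ 0) (hp : p = x / |x|) :
    (∀ l : ℝ, infConvR (fun t => |t|) (fun t => |t|) (l * x) = |l| * |x|) ∧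
    Tendsto (fun l : ℝ => infConvR (fun t => |t|) (fun t => |t|) (l * x)) atTop atTop ∧
    (∀ l : ℝ, 0 ≤ l → |l * x| - |x| - p * (l * x - x) = 0) ∧
    Tendsto (fun l : ℝ =>
        infConvR (fun t => |t| - |x| - p * (t - x)) (fun t => |t|) (l * x))
      atTop (nhds 0) := by
  have hxpos : 0 < |x| := abs_pos.mpr hx
  have hpx : p * x = |x| := by rw [hp]; exact px_eq x hx
  have habs : |p| = 1 := by
    rw [hp, abs_div, abs_abs, div_self (ne_of_gt hxpos)]
  have hf0 : ∀ s : ℝ, 0 ≤ |s| - |x| - p * (s - x) := by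
    intro s
    have : p * s ≤ |s| := by
      calc p * s ≤ |p * s| := le_abs_self _
      _ = |s| := by rw [abs_mul, habs, one_mul]
    nlinarith
  have hbreg : ∀ l : ℝ, 0 ≤ l → |l * x| - |x| - p * (l * x - x) = 0 := by
    intro l hl
    have : |l * x| = l * |x| := by rw [abs_mul, abs_of_nonneg hl]
    nlinarith
  refine ⟨fun l => by rw [infConv_abs, abs_mul], ?_, hbreg, ?_⟩
  · have : Tendsto (fun l : ℝ => |l| * |x|) atTop atTop := by
      exact (tendsto_abs_atTop_atTop).atTop_mul_const hxpos
    refine this.congr fun l => ?_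
    rw [infConv_abs, abs_mul]
  · have key : ∀ l : ℝ, 0 ≤ l →
        infConvR (fun t => |t| - |x| - p * (t - x)) (fun t => |t|) (l * x) = 0 := by
      intro l hl
      unfold infConvR
      apply le_antisymm
      · have hb : BddBelow (Set.range fun s : ℝ =>
            (|s| - |x| - p * (s - x)) + |l * x - s|) := by
          refine ⟨0, ?_⟩
          rintro y ⟨s, rfl⟩
          have := hf0 s
          have : (0:ℝ) ≤ |l * x - s| := abs_nonneg _
          positivity
        have := ciInf_le hb (l * x)
        simpa only [sub_self, abs_zero, add_zero, hbreg l hl] using this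
      · refine le_ciInf fun s => ?_
        have := hf0 s
        have h2 : (0:ℝ) ≤ |l * x - s| := abs_nonneg _
        dsimp only
        linarith
    have : ∀ᶠ l : ℝ in atTop,
        infConvR (fun t => |t| - |x| - p * (t - x)) (fun t => |t|) (l * x) = 0 :=
      (eventually_ge_atTop 0).mono fun l hl => key l hl
    exact Tendsto.congr' (by filter_upwards [this] with l h using h.symm) tendsto_const_nhds
end
end

section
/- Let g : X → ℝ ∪ {+∞} be convex with g(u₀) = 0 for some u₀ minimizing g (so g ≥ 0), and h : X → ℝ ∪ {+∞} convex and non-negative. Consider the Nested Bregman iteration producing, for l ≥ 1, pairs (u_l, v_l) with ‖A(u_l+v_l) − f^δ‖ ≤ δ that minimize D_g^{p_{l−1}}(u, u_{l−1}) + h(v) over the constraint set, where p_l ∈ ∂g(u_l) and p_l − p_{l−1} ∈ ∂h(v_l) with p₀ = 0. Then the sequence (h(v_l))_{l∈ℕ} is non-increasing. -/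
open Filter MeasureTheory
open scoped ENNReal

noncomputable section

variable {X Y : Type*} [NormedAddCommGroup X] [InnerProductSpace ℝ X]
  [NormedAddCommGroup Y] [InnerProductSpace ℝ Y]

/-- Convexity for extended-real-valued functions. -/
def EConvexOn (g : X → EReal) : Prop :=
  ∀ u v : X, ∀ a b : ℝ, 0 ≤ a → 0 ≤ b → a + b = 1 →
    g (a • u + b • v) ≤ (a : EReal) * g u + (b : EReal) * g v

/-- Subdifferential of an extended-real-valued function at `x₀`. -/
def ESubdiff (g : X → EReal) (x₀ : X) : Set X :=
  {p : X | ∀ x : X, ((inner ℝ p (x - x₀) : ℝ) : EReal) + g x₀ ≤ g x}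

/-- Infimal convolution of two extended-real-valued functions. -/
def einfConv (g h : X → EReal) (x : X) : EReal :=
  ⨅ u : X, g u + h (x - u)

/-- Bregman distance `D_g^p(a,b) = g(a) - g(b) - ⟨p, a - b⟩` in the extended reals. -/
def ebreg (g : X → EReal) (p : X) (a b : X) : EReal :=
  g a - g b - ((inner ℝ p (a - b) : ℝ) : EReal)

/-- Properness: `g` takes values in `ℝ ∪ {+∞}` and is finite somewhere. -/
def EProper (g : X → EReal) : Prop :=
  (∀ x, g x ≠ ⊥) ∧ ∃ x, g x ≠ ⊤

/-- Coercivity: `g x → ∞` as `‖x‖ → ∞`. -/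
def ECoercive (g : X → EReal) : Prop :=
  ∀ M : ℝ, ∃ R : ℝ, ∀ x : X, R ≤ ‖x‖ → (M : EReal) ≤ g x

/-- Supercoercivity: `g x / ‖x‖ → ∞` as `‖x‖ → ∞`. -/
def ESupercoercive (g : X → EReal) : Prop :=
  ∀ M : ℝ, ∃ R : ℝ, ∀ x : X, R ≤ ‖x‖ → ((M * ‖x‖ : ℝ) : EReal) ≤ g x


/-- The Nested Bregman iteration (Morozov variant) produces a
non-increasing sequence `h(v_l)`. -/
theorem nested_bregman_h_monotone
    (A : X →L[ℝ] Y) (fδ : Y) (δ : ℝ) (hδ : 0 ≤ δ)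
    (g h : X → EReal)
    (hgc : EConvexOn g) (hhc : EConvexOn h)
    (hgbot : ∀ x, g x ≠ ⊥) (hhbot : ∀ x, h x ≠ ⊥)
    (hgnn : ∀ x, (0 : EReal) ≤ g x) (hhnn : ∀ x, (0 : EReal) ≤ h x)
    (u v p : ℕ → X)
    (hu0 : g (u 0) = 0) (hp0 : p 0 = 0)
    (hfeas : ∀ l : ℕ, 1 ≤ l → ‖A (u l + v l) - fδ‖ ≤ δ)
    (hmin : ∀ l : ℕ, 1 ≤ l → ∀ u' v' : X, ‖A (u' + v') - fδ‖ ≤ δ →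
      ebreg g (p (l - 1)) (u l) (u (l - 1)) + h (v l) ≤
        ebreg g (p (l - 1)) u' (u (l - 1)) + h v')
    (hpg : ∀ l : ℕ, 1 ≤ l → p l ∈ ESubdiff g (u l))
    (hph : ∀ l : ℕ, 1 ≤ l → p l - p (l - 1) ∈ ESubdiff h (v l)) :
    ∀ l : ℕ, 1 ≤ l → h (v (l + 1)) ≤ h (v l) := by
  intro l hl
  -- g (u l) is finite
  have hfin : g (u l) ≠ ⊤ := by
    intro htop
    have h1 := hpg l hl (u 0)
    rw [htop, hu0] at h1
    simp [EReal.coe_add_top] at h1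
  obtain ⟨r, hr⟩ : ∃ r : ℝ, g (u l) = (r : EReal) :=
    ⟨(g (u l)).toReal, (EReal.coe_toReal hfin (hgbot _)).symm⟩
  have hm := hmin (l + 1) (by omega) (u l) (v l) (hfeas l hl)
  rw [Nat.add_sub_cancel] at hm
  have hd : ebreg g (p l) (u l) (u l) = 0 := by
    simp [ebreg, hr, ← EReal.coe_sub]
  have hnn : (0 : EReal) ≤ ebreg g (p l) (u (l + 1)) (u l) := by
    have h1 := hpg l hl (u (l + 1))
    rw [hr] at h1
    unfold ebreg
    rw [hr]
    set c : ℝ := inner ℝ (p l) (u (l + 1) - u l) with hc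
    calc (0 : EReal) = ((↑c + ↑r : EReal) - ↑r) - ↑c := by
          rw [← EReal.coe_add, ← EReal.coe_sub, ← EReal.coe_sub]
          norm_num
      _ ≤ (g (u (l + 1)) - ↑r) - ↑c :=
          EReal.sub_le_sub (EReal.sub_le_sub h1 le_rfl) le_rfl
  calc h (v (l + 1)) = 0 + h (v (l + 1)) := (zero_add _).symm
    _ ≤ ebreg g (p l) (u (l + 1)) (u l) + h (v (l + 1)) := add_le_add_left hnn _
    _ ≤ ebreg g (p l) (u l) (u l) + h (v l) := hm
    _ = h (v l) := by rw [hd, zero_add]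
end
end

section
/- Under the assumptions of the Nested Bregman iteration (Morozov variant), suppose there is a solution x̄ of A x = f with g(x̄) < ∞, ‖f − f^δ‖ ≤ δ, and the subgradients satisfy ⟨p_{l−1} − p_l, v − v_l⟩ ≤ 0 for all v with ‖A(u_l + v) − f^δ‖ ≤ δ. Then for every l ∈ ℕ the estimate h(v_l) ≤ h(0) + g(x̄)/l holds. In particular, if h attains its minimum at 0, then h(v_l) → min h as l → ∞. -/
open Filter MeasureTheory
open scoped ENNReal

noncomputable section

variable {X Y : Type*} [NormedAddCommGroup X] [InnerProductSpace ℝ X]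
  [NormedAddCommGroup Y] [InnerProductSpace ℝ Y]

/-- Under the Nested Bregman (Morozov) assumptions, with an exact
solution `xb` of `Ax = f` with `g(xb) < ∞` and `‖f - fδ‖ ≤ δ`, one has
`h(v_l) ≤ h(0) + g(xb)/l`; in particular if `h` attains its minimum at `0`
then `h(v_l) → min h`. -/
theorem nested_bregman_h_estimate
    (A : X →L[ℝ] Y) (f fδ : Y) (δ : ℝ) (hδ : 0 ≤ δ)
    (g h : X → EReal)
    (hgc : EConvexOn g) (hhc : EConvexOn h)
    (hgbot : ∀ x, g x ≠ ⊥) (hhbot : ∀ x, h x ≠ ⊥)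
    (hgnn : ∀ x, (0 : EReal) ≤ g x) (hhnn : ∀ x, (0 : EReal) ≤ h x)
    (u v p : ℕ → X)
    (hu0 : g (u 0) = 0) (hp0 : p 0 = 0)
    (hfeas : ∀ l : ℕ, 1 ≤ l → ‖A (u l + v l) - fδ‖ ≤ δ)
    (hmin : ∀ l : ℕ, 1 ≤ l → ∀ u' v' : X, ‖A (u' + v') - fδ‖ ≤ δ →
      ebreg g (p (l - 1)) (u l) (u (l - 1)) + h (v l) ≤
        ebreg g (p (l - 1)) u' (u (l - 1)) + h v')
    (hpg : ∀ l : ℕ, 1 ≤ l → p l ∈ ESubdiff g (u l))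
    (hph : ∀ l : ℕ, 1 ≤ l → p l - p (l - 1) ∈ ESubdiff h (v l))
    (hsub : ∀ l : ℕ, 1 ≤ l → ∀ w : X, ‖A (u l + w) - fδ‖ ≤ δ →
      (inner ℝ (p (l - 1) - p l) (w - v l) : ℝ) ≤ 0)
    (xb : X) (hxb : A xb = f) (gxb : ℝ) (hgxb : g xb = (gxb : EReal))
    (hnoise : ‖f - fδ‖ ≤ δ) :
    (∀ l : ℕ, 1 ≤ l → h (v l) ≤ h (0 : X) + ((gxb / l : ℝ) : EReal)) ∧
    ((∀ x : X, h (0 : X) ≤ h x) →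
      Tendsto (fun l : ℕ => h (v l)) atTop (nhds (h (0 : X)))) := by
  classical
  have hfeasxb : ‖A (xb + 0) - fδ‖ ≤ δ := by rw [add_zero, hxb]; exact hnoise
  rcases eq_or_ne (h 0) ⊤ with h0top | h0top
  · refine ⟨fun l hl => ?_, fun hmin0 => ?_⟩
    · rw [h0top, EReal.top_add_of_ne_bot (EReal.coe_ne_bot _)]
      exact le_top
    · have hall : ∀ x : X, h x = ⊤ := fun x => top_le_iff.mp (h0top ▸ hmin0 x)
      simp only [hall]
      exact tendsto_const_nhds
  · set c : ℝ := (h 0).toReal with hcdef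
    have hh0 : h 0 = (c : EReal) := (EReal.coe_toReal h0top (hhbot _)).symm
    -- finiteness of g (u n)
    have gfin : ∀ n, g (u n) ≠ ⊤ := by
      intro n; induction n with
      | zero => rw [hu0]; simp
      | succ n ih =>
        intro htop
        have key := hmin (n + 1) (Nat.le_add_left 1 n) xb 0 hfeasxb
        simp only [Nat.add_sub_cancel] at key
        have hgun : g (u n) = ((g (u n)).toReal : EReal) :=
          (EReal.coe_toReal ih (hgbot _)).symm
        rw [ebreg, ebreg, hgun, htop, hh0, hgxb, EReal.top_sub_coe, EReal.top_sub_coe,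
          EReal.top_add_of_ne_bot (hhbot _), ← EReal.coe_sub, ← EReal.coe_sub,
          ← EReal.coe_add] at key
        exact (EReal.coe_lt_top _).not_ge key
    -- finiteness of h (v (n+1))
    have hfin : ∀ n : ℕ, h (v (n + 1)) ≠ ⊤ := by
      intro n htop
      have key := hmin (n + 1) (Nat.le_add_left 1 n) xb 0 hfeasxb
      simp only [Nat.add_sub_cancel] at key
      have hgun : g (u n) = ((g (u n)).toReal : EReal) :=
        (EReal.coe_toReal (gfin n) (hgbot _)).symm
      have hgun1 : g (u (n + 1)) = ((g (u (n + 1))).toReal : EReal) :=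
        (EReal.coe_toReal (gfin (n + 1)) (hgbot _)).symm
      rw [ebreg, ebreg, hgun1, hgun, htop, hh0, hgxb, ← EReal.coe_sub, ← EReal.coe_sub,
        ← EReal.coe_sub, ← EReal.coe_sub, EReal.coe_add_top, ← EReal.coe_add] at key
      exact (EReal.coe_lt_top _).not_ge key
    -- real-valued quantities
    set a : ℕ → ℝ := fun n => (g (u n)).toReal with hadef
    set b : ℕ → ℝ := fun n => (h (v n)).toReal with hbdef
    have hga : ∀ n, g (u n) = ((a n : ℝ) : EReal) := fun n =>
      (EReal.coe_toReal (gfin n) (hgbot _)).symm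
    have hhb : ∀ n : ℕ, h (v (n + 1)) = ((b (n + 1) : ℝ) : EReal) := fun n =>
      (EReal.coe_toReal (hfin n) (hhbot _)).symm
    have ha0 : a 0 = 0 := by simp [hadef, hu0]
    have hann : ∀ n, 0 ≤ a n := fun n => by
      have := hgnn (u n); rw [hga n] at this; exact_mod_cast this
    have hgxbnn : 0 ≤ gxb := by have := hgnn xb; rw [hgxb] at this; exact_mod_cast this
    -- real translation of the subgradient inequality for g
    have hpgR : ∀ n : ℕ, 1 ≤ n → ∀ x : X, ∀ s : ℝ, g x = (s : EReal) →
        (inner ℝ (p n) (x - u n) : ℝ) + a n ≤ s := by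
      intro n hn x s hs
      have := hpg n hn x
      rw [hga n, hs, ← EReal.coe_add] at this
      exact_mod_cast this
    -- real translation of the subgradient inequality for h
    have hphR : ∀ n : ℕ, ∀ x : X, ∀ s : ℝ, h x = (s : EReal) →
        (inner ℝ (p (n + 1) - p n) (x - v (n + 1)) : ℝ) + b (n + 1) ≤ s := by
      intro n x s hs
      have := hph (n + 1) (Nat.le_add_left 1 n) x
      simp only [Nat.add_sub_cancel] at this
      rw [hhb n, hs, ← EReal.coe_add] at this
      exact_mod_cast this
    -- Bregman distance to the exact solution
    set D : ℕ → ℝ := fun n => gxb - a n - (inner ℝ (p n) (xb - u n) : ℝ) with hDdef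
    have hD0 : D 0 = gxb := by simp [hDdef, hp0, ha0]
    have hDnn : ∀ n : ℕ, 1 ≤ n → 0 ≤ D n := by
      intro n hn
      have := hpgR n hn xb gxb hgxb
      simp only [hDdef]; linarith
    -- the per-step estimate
    have step : ∀ n : ℕ, b (n + 1) + D (n + 1) ≤ c + D n := by
      intro n
      have ha1 := hphR n 0 c hh0
      have hb1 := hsub (n + 1) (Nat.le_add_left 1 n) (xb - u (n + 1))
        (by rw [add_sub_cancel]; rw [hxb]; exact hnoise)
      simp only [Nat.add_sub_cancel] at hb1
      have hc1 : (inner ℝ (p n) (u (n + 1) - u n) : ℝ) + a n ≤ a (n + 1) := by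
        rcases Nat.eq_zero_or_pos n with h0 | hpos
        · subst h0
          simp only [hp0, inner_zero_left, ha0, zero_add, add_zero]
          exact hann 1
        · exact hpgR n hpos (u (n + 1)) (a (n + 1)) (hga _)
      simp only [hDdef]
      simp only [inner_sub_left, inner_sub_right, zero_sub, inner_neg_right] at ha1 hb1 hc1 ⊢
      linarith
    -- monotonicity of b
    have mono : ∀ n : ℕ, b (n + 1 + 1) ≤ b (n + 1) := by
      intro n
      have h1 := hphR (n + 1) (v (n + 1)) (b (n + 1)) (hhb n)
      have h2 := hsub (n + 1 + 1) (Nat.le_add_left 1 (n + 1))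
        (u (n + 1) + v (n + 1) - u (n + 1 + 1))
        (by rw [add_sub_cancel]; exact hfeas (n + 1) (Nat.le_add_left 1 n))
      simp only [Nat.add_sub_cancel] at h2
      have h3 := hpgR (n + 1) (Nat.le_add_left 1 n) (u (n + 1 + 1)) (a (n + 1 + 1)) (hga _)
      have h4 := hpgR (n + 1 + 1) (Nat.le_add_left 1 (n + 1)) (u (n + 1)) (a (n + 1)) (hga _)
      simp only [inner_sub_left, inner_sub_right, inner_add_right] at h1 h2 h3 h4
      linarith
    -- telescoping with monotonicity
    have key : ∀ n : ℕ, ((n + 1 : ℕ) : ℝ) * (b (n + 1) - c) ≤ D 0 - D (n + 1) := by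
      intro n; induction n with
      | zero =>
        have := step 0
        push_cast
        linarith
      | succ n ih =>
        have hs := step (n + 1)
        have hm := mono n
        have hmul : ((n + 1 : ℕ) : ℝ) * (b (n + 1 + 1) - c) ≤
            ((n + 1 : ℕ) : ℝ) * (b (n + 1) - c) :=
          mul_le_mul_of_nonneg_left (by linarith) (by positivity)
        push_cast at hmul ih ⊢
        linarith
    -- part 1
    have part1 : ∀ l : ℕ, 1 ≤ l → h (v l) ≤ h (0 : X) + ((gxb / l : ℝ) : EReal) := by
      intro l hl
      obtain ⟨m, rfl⟩ : ∃ m, l = m + 1 := ⟨l - 1, by omega⟩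
      have hK := key m
      rw [hD0] at hK
      have hD := hDnn (m + 1) (Nat.le_add_left 1 m)
      have hpos : (0 : ℝ) < ((m + 1 : ℕ) : ℝ) := by positivity
      have hbc : b (m + 1) ≤ c + gxb / ((m + 1 : ℕ) : ℝ) := by
        rw [← sub_le_iff_le_add', le_div_iff₀ hpos]
        nlinarith
      rw [hhb m, hh0, ← EReal.coe_add]
      exact_mod_cast hbc
    refine ⟨part1, fun hmin0 => ?_⟩
    rw [hh0]
    have hup : Tendsto (fun l : ℕ => ((c + gxb / l : ℝ) : EReal)) atTop (nhds (c : EReal)) := by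
      rw [EReal.tendsto_coe]
      have : Tendsto (fun l : ℕ => c + gxb / l) atTop (nhds (c + 0)) :=
        tendsto_const_nhds.add (tendsto_const_div_atTop_nhds_zero_nat gxb)
      simpa using this
    refine tendsto_of_tendsto_of_tendsto_of_le_of_le' tendsto_const_nhds hup ?_ ?_
    · exact Eventually.of_forall fun l => hh0 ▸ hmin0 (v l)
    · filter_upwards [eventually_ge_atTop 1] with l hl
      have := part1 l hl
      rw [hh0, ← EReal.coe_add] at this
      exact this
end
end

section
/- (Coercivity transfer, noise-free case) Let g, h : X → ℝ ∪ {+∞} be proper, convex, lsc, non-negative, with h even (h(−x) = h(x)), and f = A x̄ for some x̄. Suppose p ∈ ∂g(ū) ∩ (ker A)^⊥ for some ū ∈ dom g and p ∈ ∂h(v̄) for some v̄. If ((u_n, v_n)) is a sequence with A(u_n + v_n) = f for all n and g(u_n) + h(v_n) → ∞, then D_g^{p}(u_n, ū) + h(v_n) → ∞. -/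
open Filter MeasureTheory
open scoped ENNReal

noncomputable section

variable {X Y : Type*} [NormedAddCommGroup X] [InnerProductSpace ℝ X]
  [NormedAddCommGroup Y] [InnerProductSpace ℝ Y]

/-- Coercivity transfer, noise-free case: with `h` even,
`f = A xb`, `p ∈ ∂g(ub) ∩ (ker A)ᗮ`, `p ∈ ∂h(vb)`: if `A(u_n + v_n) = f` and
`g(u_n) + h(v_n) → ∞`, then `D_g^p(u_n, ub) + h(v_n) → ∞`. -/
theorem coercivity_transfer_noisefree
    (A : X →L[ℝ] Y) (f : Y)
    (g h : X → EReal) (hgp : EProper g) (hhp : EProper h)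
    (hgc : EConvexOn g) (hhc : EConvexOn h)
    (hgl : LowerSemicontinuous g) (hhl : LowerSemicontinuous h)
    (hgnn : ∀ x, (0 : EReal) ≤ g x) (hhnn : ∀ x, (0 : EReal) ≤ h x)
    (hheven : ∀ x : X, h (-x) = h x)
    (xb ub vb p : X) (hf : f = A xb)
    (hub : g ub ≠ ⊤)
    (hpg : p ∈ ESubdiff g ub)
    (hpker : p ∈ Submodule.orthogonal (LinearMap.ker (A : X →ₗ[ℝ] Y)))
    (hph : p ∈ ESubdiff h vb)
    (u v : ℕ → X) (hfeas : ∀ n : ℕ, A (u n + v n) = f)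
    (hdiv : Tendsto (fun n : ℕ => g (u n) + h (v n)) atTop (nhds (⊤ : EReal))) :
    Tendsto (fun n : ℕ => ebreg g p (u n) ub + h (v n)) atTop (nhds (⊤ : EReal)) := by
  -- finite values at ub and vb
  set gub : ℝ := (g ub).toReal with hgubdef
  have hgub : g ub = (gub : EReal) := (EReal.coe_toReal hub (hgp.1 ub)).symm
  have hvbne : h vb ≠ ⊤ := by
    intro htop
    obtain ⟨x0, hx0⟩ := hhp.2
    have := hph x0
    rw [htop, EReal.add_top_of_ne_bot (EReal.coe_ne_bot _), top_le_iff] at this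
    exact hx0 this
  set hvb : ℝ := (h vb).toReal with hhvbdef
  have hhvb : h vb = (hvb : EReal) := (EReal.coe_toReal hvbne (hhp.1 vb)).symm
  set C1 : ℝ := gub + inner ℝ p xb - inner ℝ p ub + inner ℝ p vb - hvb with hC1
  -- kernel orthogonality
  have hker : ∀ n, (inner ℝ p (u n) : ℝ) + inner ℝ p (v n) = inner ℝ p xb := by
    intro n
    have hm : u n + v n - xb ∈ LinearMap.ker (A : X →ₗ[ℝ] Y) := by
      rw [LinearMap.mem_ker]
      have : A (u n + v n - xb) = A (u n + v n) - A xb := by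
        exact map_sub A _ _
      rw [ContinuousLinearMap.coe_coe, this, hfeas n, hf, sub_self]
    have h0 : (inner ℝ (u n + v n - xb) p : ℝ) = 0 :=
      (Submodule.mem_orthogonal _ p).mp hpker _ hm
    rw [inner_sub_left, inner_add_left] at h0
    have := real_inner_comm p (u n)
    have := real_inner_comm p (v n)
    have := real_inner_comm p xb
    linarith [h0]
  -- Bregman distance is nonnegative
  have hD : ∀ n, (0 : EReal) ≤ ebreg g p (u n) ub := by
    intro n
    have hsub := hpg (u n)
    rw [hgub] at hsub
    unfold ebreg
    rw [hgub]
    set a := g (u n) with ha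
    set c : ℝ := inner ℝ p (u n - ub) with hc
    clear_value a
    induction a using EReal.rec with
    | bot => simp [← EReal.coe_add] at hsub
    | coe a =>
        rw [← EReal.coe_sub, ← EReal.coe_sub]
        norm_cast at hsub ⊢; linarith
    | top => rw [EReal.top_sub_coe, EReal.top_sub_coe]; exact le_top
  have hDnb : ∀ n, ebreg g p (u n) ub ≠ ⊥ := fun n =>
    (lt_of_lt_of_le (by simp : (⊥ : EReal) < 0) (hD n)).ne'
  -- key inequality
  have hkey : ∀ n, g (u n) + h (v n) ≤
      (ebreg g p (u n) ub + h (v n)) + (ebreg g p (u n) ub + h (v n)) + (C1 : EReal) := by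
    intro n
    by_cases hgt : g (u n) = ⊤
    · have hS : ebreg g p (u n) ub + h (v n) = ⊤ := by
        have : ebreg g p (u n) ub = ⊤ := by
          unfold ebreg; rw [hgt, hgub, EReal.top_sub_coe, EReal.top_sub_coe]
        rw [this, EReal.top_add_of_ne_bot (hhp.1 _)]
      rw [hS, EReal.top_add_of_ne_bot (by simp : (⊤:EReal) ≠ ⊥),
        EReal.top_add_of_ne_bot (EReal.coe_ne_bot _)]
      exact le_top
    · by_cases hht : h (v n) = ⊤
      · have hS : ebreg g p (u n) ub + h (v n) = ⊤ := by
          rw [hht, EReal.add_top_of_ne_bot (hDnb n)]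
        rw [hS, EReal.top_add_of_ne_bot (by simp : (⊤:EReal) ≠ ⊥),
          EReal.top_add_of_ne_bot (EReal.coe_ne_bot _)]
        exact le_top
      · -- finite case
        set gu : ℝ := (g (u n)).toReal with hgudef
        have hgu : g (u n) = (gu : EReal) := (EReal.coe_toReal hgt (hgp.1 _)).symm
        set hv : ℝ := (h (v n)).toReal with hhvdef
        have hhv : h (v n) = (hv : EReal) := (EReal.coe_toReal hht (hhp.1 _)).symm
        -- subgradient inequality for g at ub
        have ha : (inner ℝ p (u n - ub) : ℝ) + gub ≤ gu := by
          have := hpg (u n); rw [hgub, hgu] at this; norm_cast at this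
        -- subgradient inequality for h at vb applied to -(v n)
        have hb : -(inner ℝ p (v n) : ℝ) - inner ℝ p vb + hvb ≤ hv := by
          have := hph (-(v n))
          rw [hheven, hhvb, hhv] at this
          have hip : (inner ℝ p (-(v n) - vb) : ℝ) = -(inner ℝ p (v n)) - inner ℝ p vb := by
            rw [inner_sub_right, inner_neg_right]
          rw [hip] at this; norm_cast at this
        have hc := hker n
        have hip2 : (inner ℝ p (u n - ub) : ℝ) = inner ℝ p (u n) - inner ℝ p ub :=
          inner_sub_right _ _ _
        unfold ebreg
        rw [hgu, hhv, hgub, ← EReal.coe_sub, ← EReal.coe_sub, ← EReal.coe_add,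
          ← EReal.coe_add, ← EReal.coe_add, ← EReal.coe_add, EReal.coe_le_coe_iff]
        rw [hip2] at ha ⊢
        linarith
  -- conclude
  rw [EReal.tendsto_nhds_top_iff_real] at hdiv ⊢
  intro M
  filter_upwards [hdiv (2 * M + C1)] with n hn
  by_contra hcon
  push_neg at hcon
  have h2 : (ebreg g p (u n) ub + h (v n)) + (ebreg g p (u n) ub + h (v n)) + (C1 : EReal)
      ≤ ((2 * M + C1 : ℝ) : EReal) := by
    have : ((2 * M + C1 : ℝ) : EReal) = (M : EReal) + (M : EReal) + (C1 : EReal) := by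
      norm_cast; ring
    rw [this]
    exact add_le_add (add_le_add hcon hcon) le_rfl
  exact absurd (lt_of_lt_of_le hn (le_trans (hkey n) h2)) (lt_irrefl _)
end
end

section
/- If there exists a minimizing sequence (v_n) of h and solutions (x_n) of A x = f with g(x_n − v_n) < ∞ for all n, then the Nested Bregman iterates satisfy lim_{l→∞} h(v_l^δ) = inf h, even if h does not attain its minimum at 0. More precisely, h(v_l^δ) ≤ h(v_n) + g(x_n − v_n)/l for all l, n. -/
open Filter MeasureTheory
open scoped ENNReal

noncomputable section

variable {X Y : Type*} [NormedAddCommGroup X] [InnerProductSpace ℝ X]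
  [NormedAddCommGroup Y] [InnerProductSpace ℝ Y]

/-- if there is a minimizing sequence `(vseq n)` of `h` and
solutions `(xseq n)` of `Ax = f` with `g(xseq n − vseq n) < ∞`, then the Nested
Bregman iterates satisfy `h(v_l) ≤ h(vseq n) + g(xseq n − vseq n)/l` for all
`l, n`, and hence `h(v_l) → inf h`, even if `h` does not attain its minimum
at `0`. -/
theorem nested_bregman_inf_convergence
    (A : X →L[ℝ] Y) (f fδ : Y) (δ : ℝ) (hδ : 0 ≤ δ)
    (g h : X → EReal)
    (hgc : EConvexOn g) (hhc : EConvexOn h)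
    (hgbot : ∀ x, g x ≠ ⊥) (hhbot : ∀ x, h x ≠ ⊥)
    (hgnn : ∀ x, (0 : EReal) ≤ g x) (hhnn : ∀ x, (0 : EReal) ≤ h x)
    (u v p : ℕ → X)
    (hu0 : g (u 0) = 0) (hp0 : p 0 = 0)
    (hfeas : ∀ l : ℕ, 1 ≤ l → ‖A (u l + v l) - fδ‖ ≤ δ)
    (hmin : ∀ l : ℕ, 1 ≤ l → ∀ u' v' : X, ‖A (u' + v') - fδ‖ ≤ δ →
      ebreg g (p (l - 1)) (u l) (u (l - 1)) + h (v l) ≤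
        ebreg g (p (l - 1)) u' (u (l - 1)) + h v')
    (hpg : ∀ l : ℕ, 1 ≤ l → p l ∈ ESubdiff g (u l))
    (hph : ∀ l : ℕ, 1 ≤ l → p l - p (l - 1) ∈ ESubdiff h (v l))
    (hsub : ∀ l : ℕ, 1 ≤ l → ∀ w : X, ‖A (u l + w) - fδ‖ ≤ δ →
      (inner ℝ (p (l - 1) - p l) (w - v l) : ℝ) ≤ 0)
    (hnoise : ‖f - fδ‖ ≤ δ)
    (vseq xseq : ℕ → X)
    (hxseq : ∀ n : ℕ, A (xseq n) = f)
    (gv : ℕ → ℝ) (hgv : ∀ n : ℕ, g (xseq n - vseq n) = (gv n : EReal))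
    (hminseq : Tendsto (fun n : ℕ => h (vseq n)) atTop (nhds (⨅ x : X, h x))) :
    (∀ l : ℕ, 1 ≤ l → ∀ n : ℕ,
      h (v l) ≤ h (vseq n) + ((gv n / l : ℝ) : EReal)) ∧
    Tendsto (fun l : ℕ => h (v l)) atTop (nhds (⨅ x : X, h x)) := by
  have key : ∀ n : ℕ, ∀ l : ℕ, 1 ≤ l →
      h (v l) ≤ h (vseq n) + ((gv n / l : ℝ) : EReal) := by
    intro n
    by_cases htop : h (vseq n) = ⊤
    · intro l _
      rw [htop, EReal.top_add_of_ne_bot (EReal.coe_ne_bot _)]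
      exact le_top
    obtain ⟨Hb, hHb⟩ : ∃ r : ℝ, h (vseq n) = (r : EReal) :=
      ⟨(h (vseq n)).toReal, (EReal.coe_toReal htop (hhbot _)).symm⟩
    have feas : ‖A ((xseq n - vseq n) + vseq n) - fδ‖ ≤ δ := by
      rw [sub_add_cancel, hxseq n]; exact hnoise
    -- finiteness of g (u m)
    have hGfin : ∀ m : ℕ, ∃ r : ℝ, g (u m) = (r : EReal) := by
      intro m
      rcases Nat.eq_zero_or_pos m with h0 | h1
      · exact ⟨0, by rw [h0, hu0]; norm_cast⟩
      · refine ⟨(g (u m)).toReal, (EReal.coe_toReal ?_ (hgbot _)).symm⟩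
        intro hT
        have hp := hpg m h1 (u 0)
        rw [hu0, hT, EReal.add_top_of_ne_bot (EReal.coe_ne_bot _)] at hp
        simp at hp
    choose G hG using hGfin
    have hG0 : G 0 = 0 := by
      have h0 := (hG 0).symm.trans hu0
      exact_mod_cast h0
    -- Bregman distances between consecutive iterates are nonnegative
    have hB : ∀ k : ℕ, (inner ℝ (p k) (u (k + 1) - u k) : ℝ) + G k ≤ G (k + 1) := by
      intro k
      rcases Nat.eq_zero_or_pos k with h0 | h1
      · subst h0
        rw [hG0, hp0, inner_zero_left]
        have h1 := hgnn (u 1)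
        rw [hG 1] at h1
        have : (0 : ℝ) ≤ G 1 := by exact_mod_cast h1
        linarith
      · have hp := hpg k h1 (u (k + 1))
        rw [hG k, hG (k + 1)] at hp
        exact_mod_cast hp
    -- finiteness of h (v (k+1))
    have hHfin : ∀ k : ℕ, ∃ r : ℝ, h (v (k + 1)) = (r : EReal) := by
      intro k
      refine ⟨(h (v (k + 1))).toReal, (EReal.coe_toReal ?_ (hhbot _)).symm⟩
      intro hT
      have hm := hmin (k + 1) (Nat.le_add_left 1 k) (xseq n - vseq n) (vseq n) feas
      simp only [Nat.add_sub_cancel] at hm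
      unfold ebreg at hm
      rw [hG (k + 1), hG k, hgv n, hHb, hT] at hm
      rw [show ((G (k + 1) : EReal) - (G k : EReal)
            - ((inner ℝ (p k) (u (k + 1) - u k) : ℝ) : EReal))
          = ((G (k + 1) - G k - (inner ℝ (p k) (u (k + 1) - u k) : ℝ) : ℝ) : EReal) from by
            norm_cast,
        EReal.add_top_of_ne_bot (EReal.coe_ne_bot _)] at hm
      rw [show ((gv n : EReal) - (G k : EReal)
            - ((inner ℝ (p k) (xseq n - vseq n - u k) : ℝ) : EReal) + (Hb : EReal))
          = ((gv n - G k - (inner ℝ (p k) (xseq n - vseq n - u k) : ℝ) + Hb : ℝ) : EReal) from by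
            norm_cast] at hm
      rw [top_le_iff] at hm
      exact EReal.coe_ne_top _ hm
    choose Hh hH using hHfin
    -- E 0 = gv n
    have hE0 : gv n - G 0 - (inner ℝ (p 0) (xseq n - vseq n - u 0) : ℝ) = gv n := by
      rw [hG0, hp0, inner_zero_left]; ring
    -- E (k+1) ≥ 0
    have hEnn : ∀ k : ℕ,
        (0 : ℝ) ≤ gv n - G (k + 1) - (inner ℝ (p (k + 1)) (xseq n - vseq n - u (k + 1)) : ℝ) := by
      intro k
      have hp := hpg (k + 1) (Nat.le_add_left 1 k) (xseq n - vseq n)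
      rw [hG (k + 1), hgv n] at hp
      have hp' : (inner ℝ (p (k + 1)) (xseq n - vseq n - u (k + 1)) : ℝ) + G (k + 1) ≤ gv n := by
        exact_mod_cast hp
      linarith
    -- monotonicity of h (v l)
    have hmono : ∀ k : ℕ, Hh (k + 1) ≤ Hh k := by
      intro k
      have hm := hmin (k + 1 + 1) (Nat.le_add_left 1 (k + 1)) (u (k + 1)) (v (k + 1))
        (hfeas (k + 1) (Nat.le_add_left 1 k))
      simp only [Nat.add_sub_cancel] at hm
      unfold ebreg at hm
      rw [hG (k + 1 + 1), hG (k + 1), hH (k + 1), hH k, sub_self, inner_zero_right] at hm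
      have hm' : G (k + 1 + 1) - G (k + 1) - (inner ℝ (p (k + 1)) (u (k + 1 + 1) - u (k + 1)) : ℝ)
          + Hh (k + 1) ≤ G (k + 1) - G (k + 1) - (0 : ℝ) + Hh k := by
        exact_mod_cast hm
      have hb := hB (k + 1)
      linarith
    -- the key one-step estimate: E (k+1) + (Hh k - Hb) ≤ E k
    have hstep : ∀ k : ℕ,
        (gv n - G (k + 1) - (inner ℝ (p (k + 1)) (xseq n - vseq n - u (k + 1)) : ℝ)) + (Hh k - Hb)
          ≤ gv n - G k - (inner ℝ (p k) (xseq n - vseq n - u k) : ℝ) := by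
      intro k
      have hb := hB k
      have hfeas2 : ‖A (u (k + 1) + (xseq n - vseq n + vseq n - u (k + 1))) - fδ‖ ≤ δ := by
        have harg : u (k + 1) + (xseq n - vseq n + vseq n - u (k + 1)) = xseq n := by abel
        rw [harg, hxseq n]; exact hnoise
      have hs := hsub (k + 1) (Nat.le_add_left 1 k) (xseq n - vseq n + vseq n - u (k + 1)) hfeas2
      simp only [Nat.add_sub_cancel] at hs
      have hh3 := hph (k + 1) (Nat.le_add_left 1 k)
      simp only [Nat.add_sub_cancel] at hh3
      have hh3' := hh3 (vseq n)
      rw [hH k, hHb] at hh3'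
      have hh3r : (inner ℝ (p (k + 1) - p k) (vseq n - v (k + 1)) : ℝ) + Hh k ≤ Hb := by
        exact_mod_cast hh3'
      simp only [inner_sub_left, inner_sub_right, inner_add_right] at hs hh3r hb ⊢
      linarith
    -- summation
    have hsum : ∀ k : ℕ, ((k : ℝ) + 1) * (Hh k - Hb)
        + (gv n - G (k + 1) - (inner ℝ (p (k + 1)) (xseq n - vseq n - u (k + 1)) : ℝ)) ≤ gv n := by
      intro k
      induction k with
      | zero =>
        have h1 := hstep 0
        rw [hE0] at h1
        push_cast
        linarith
      | succ k ih =>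
        have h1 := hstep (k + 1)
        have h2 := hmono k
        have h3 : ((k : ℝ) + 1) * (Hh (k + 1) - Hb) ≤ ((k : ℝ) + 1) * (Hh k - Hb) :=
          mul_le_mul_of_nonneg_left (by linarith) (by positivity)
        push_cast
        push_cast at ih
        nlinarith [h1, h3, ih]
    intro l hl
    obtain ⟨k, rfl⟩ : ∃ k, l = k + 1 := ⟨l - 1, (Nat.succ_pred_eq_of_pos hl).symm⟩
    rw [hH k, hHb]
    have hpos : (0 : ℝ) < ((k + 1 : ℕ) : ℝ) := by positivity
    have hEk := hEnn k
    have hS := hsum k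
    have hreal : Hh k ≤ Hb + gv n / ((k + 1 : ℕ) : ℝ) := by
      rw [← sub_le_iff_le_add', le_div_iff₀ hpos]
      push_cast
      nlinarith [hS, hEk]
    exact_mod_cast hreal
  refine ⟨fun l hl n => key n l hl, ?_⟩
  refine tendsto_order.2 ⟨?_, ?_⟩
  · intro a ha
    exact Filter.Eventually.of_forall fun l => lt_of_lt_of_le ha (iInf_le _ _)
  · intro a ha
    obtain ⟨b, hb1, hb2⟩ := exists_between ha
    have hbt : b ≠ ⊤ := (hb2.trans_le le_top).ne
    have hinfnn : (0 : EReal) ≤ ⨅ x : X, h x := le_iInf hhnn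
    have hbb : b ≠ ⊥ := (lt_of_le_of_lt (bot_le.trans hinfnn) hb1).ne'
    obtain ⟨br, rfl⟩ : ∃ r : ℝ, b = (r : EReal) := ⟨b.toReal, (EReal.coe_toReal hbt hbb).symm⟩
    have hev := hminseq.eventually_lt_const hb1
    obtain ⟨m, hm⟩ := hev.exists
    have hmt : h (vseq m) ≠ ⊤ := (hm.trans_le le_top).ne
    obtain ⟨c, hc⟩ : ∃ r : ℝ, h (vseq m) = (r : EReal) :=
      ⟨(h (vseq m)).toReal, (EReal.coe_toReal hmt (hhbot _)).symm⟩
    have hclt : (c : EReal) < a := lt_trans (hc ▸ hm) hb2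
    have htends : Tendsto (fun l : ℕ => ((c + gv m / l : ℝ) : EReal)) atTop (nhds (c : EReal)) := by
      rw [EReal.tendsto_coe]
      simpa using tendsto_const_nhds.add (tendsto_const_div_atTop_nhds_zero_nat (gv m))
    have hev2 : ∀ᶠ l : ℕ in atTop, ((c + gv m / l : ℝ) : EReal) < a :=
      htends.eventually_lt_const hclt
    filter_upwards [hev2, eventually_ge_atTop 1] with l h1 h2
    calc h (v l) ≤ h (vseq m) + ((gv m / l : ℝ) : EReal) := key m l h2
      _ = ((c + gv m / l : ℝ) : EReal) := by rw [hc]; norm_cast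
      _ < a := h1
end
end
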